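/- Consider the DMMF process. Suppose R, U ⊆ {1,...,n} are nonempty disjoint subsets such that (1 − ∏_{k∈U}(1−p_k)) / (Σ_{j∈U} α_j) < ∏_{k∉R}(1−p_k) · (1 − ∏_{k∈R}(1−p_k)) / (Σ_{j∈R} α_j). Then there exists a constant C > 0 such that, almost surely, liminf_{t→∞} ( Σ_{i∈R} W_i[t] / Σ_{i∈R} α_i − Σ_{i∈U} W_i[t] / Σ_{i∈U} α_i ) / t ≥ C. -/

import Mathlib

set_option maxHeartbeats 1000000


open MeasureTheory ProbabilityTheory Filter Topology

/-- Winner predicate: given fair shares `α`, previous win counts `Wprev`, and the requests `r`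
in the current round, agent `i` wins iff it requests and beats (in normalized win count,
ties broken by smallest index) every other requesting agent. -/
def winsAt {n : ℕ} (α : Fin n → ℝ) (Wprev : Fin n → ℕ) (r : Fin n → Bool) (i : Fin n) : Prop :=
  r i = true ∧ ∀ j : Fin n, r j = true →
    ((Wprev i : ℝ) / α i < (Wprev j : ℝ) / α j ∨
      ((Wprev i : ℝ) / α i = (Wprev j : ℝ) / α j ∧ i ≤ j))

open Classical in
/-- `W α r t i` : number of rounds, among the first `t` rounds, won by agent `i` under the
DMMF allocation rule, when the (sample-path) requests are given by `r` (`r t i = true` means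
agent `i` requests in round `t+1`). -/
noncomputable def W {n : ℕ} (α : Fin n → ℝ) (r : ℕ → Fin n → Bool) : ℕ → Fin n → ℕ
  | 0, _ => 0
  | t + 1, i => W α r t i + (if winsAt α (W α r t) (r t) i then 1 else 0)

/-- The subgroup stability criterion for the set `S`. -/
def StabCrit {n : ℕ} (α p : Fin n → ℝ) (S : Finset (Fin n)) : Prop :=
  ∀ R ⊆ S, R.Nonempty →
    (1 - ∏ k ∈ S, (1 - p k)) / (∑ k ∈ S, α k) ≤ (1 - ∏ k ∈ R, (1 - p k)) / (∑ k ∈ R, α k)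

/-- The strict subgroup stability criterion for the set `S`. -/
def StabCritStrict {n : ℕ} (α p : Fin n → ℝ) (S : Finset (Fin n)) : Prop :=
  StabCrit α p S ∧ ∀ R ⊂ S, R.Nonempty →
    (1 - ∏ k ∈ S, (1 - p k)) / (∑ k ∈ S, α k) < (1 - ∏ k ∈ R, (1 - p k)) / (∑ k ∈ R, α k)

/-- The hypotheses of the DMMF process: the requests `req t i` (request of agent `i` in
round `t+1`) are independent across agents and rounds, with `req t i` Bernoulli of
parameter `p i`; the fair shares `α i` are positive and sum to `1`. -/
structure IsDMMF {Ω : Type*} [MeasurableSpace Ω] (μ : Measure Ω) {n : ℕ}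
    (α p : Fin n → ℝ) (req : ℕ → Fin n → Ω → Bool) : Prop where
  isProb : IsProbabilityMeasure μ
  α_pos : ∀ i, 0 < α i
  α_sum : ∑ i, α i = 1
  p_mem : ∀ i, p i ∈ Set.Icc (0 : ℝ) 1
  meas : ∀ t i, Measurable (req t i)
  indep : iIndepFun
    (fun ti : ℕ × Fin n => req ti.1 ti.2) μ
  law : ∀ t i, μ {ω | req t i ω = true} = ENNReal.ofReal (p i)

/-- Uniqueness of the winner. -/
lemma winsAt_unique {n : ℕ} {α : Fin n → ℝ} {Wp : Fin n → ℕ} {r : Fin n → Bool} {i j : Fin n}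
    (hi : winsAt α Wp r i) (hj : winsAt α Wp r j) : i = j := by
  obtain ⟨hri, hi⟩ := hi
  obtain ⟨hrj, hj⟩ := hj
  rcases hi j hrj with h1 | ⟨h1, h2⟩ <;> rcases hj i hri with h3 | ⟨h3, h4⟩
  · exact absurd h3 (by linarith)
  · exact absurd h1 (by rw [h3]; exact lt_irrefl _)
  · exact absurd h3 (by rw [h1]; exact lt_irrefl _)
  · exact le_antisymm h2 h4

/-- Existence of a winner when at least one agent requests. -/
lemma winsAt_exists {n : ℕ} (α : Fin n → ℝ) (Wp : Fin n → ℕ) (r : Fin n → Bool)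
    (h : ∃ j, r j = true) : ∃ i, winsAt α Wp r i := by
  classical
  obtain ⟨j0, hj0⟩ := h
  set T : Finset (Fin n) := Finset.univ.filter (fun i => r i = true) with hT
  have hTne : T.Nonempty := ⟨j0, by simp [hT, hj0]⟩
  obtain ⟨i0, hi0T, hi0min⟩ := T.exists_min_image (fun i => (Wp i : ℝ) / α i) hTne
  set T' : Finset (Fin n) := T.filter (fun i => (Wp i : ℝ) / α i = (Wp i0 : ℝ) / α i0) with hT'
  have hT'ne : T'.Nonempty := ⟨i0, by simp [hT', hi0T]⟩
  refine ⟨T'.min' hT'ne, ?_, ?_⟩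
  · exact (Finset.mem_filter.1 ((Finset.mem_filter.1 (T'.min'_mem hT'ne)).1)).2
  · intro j hrj
    have hmem := T'.min'_mem hT'ne
    have hval : (Wp (T'.min' hT'ne) : ℝ) / α (T'.min' hT'ne) = (Wp i0 : ℝ) / α i0 :=
      (Finset.mem_filter.1 hmem).2
    have hjT : j ∈ T := by simp [hT, hrj]
    have hle : (Wp i0 : ℝ) / α i0 ≤ (Wp j : ℝ) / α j := hi0min j hjT
    rcases lt_or_eq_of_le hle with h1 | h1
    · exact Or.inl (hval ▸ h1)
    · refine Or.inr ⟨by rw [hval, h1], ?_⟩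
      exact T'.min'_le j (by simp [hT', hjT, ← h1])

open Classical in
/-- Lower bound for the wins of group `R`: every round in which only members of `R` request
(and at least one of them requests) is won by a member of `R`. -/
lemma W_sum_ge {n : ℕ} (α : Fin n → ℝ) (r : ℕ → Fin n → Bool) (R : Finset (Fin n)) (t : ℕ) :
    (∑ s ∈ Finset.range t,
      if (∀ k ∉ R, r s k = false) ∧ (∃ k, r s k = true) then 1 else 0)
      ≤ ∑ i ∈ R, W α r t i := by
  induction t with
  | zero => simp [W]
  | succ t ih =>
    rw [Finset.sum_range_succ]
    have hW : ∑ i ∈ R, W α r (t + 1) i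
        = (∑ i ∈ R, W α r t i) + ∑ i ∈ R, (if winsAt α (W α r t) (r t) i then 1 else 0) := by
      simp [W, Finset.sum_add_distrib]
    rw [hW]
    refine add_le_add ih ?_
    by_cases hc : (∀ k ∉ R, r t k = false) ∧ (∃ k, r t k = true)
    · simp only [if_pos hc]
      obtain ⟨i, hi⟩ := winsAt_exists α (W α r t) (r t) hc.2
      have hiR : i ∈ R := by
        by_contra hniR
        have := hc.1 i hniR
        rw [hi.1] at this; simp at this
      calc (1 : ℕ) = (if winsAt α (W α r t) (r t) i then 1 else 0) := by rw [if_pos hi]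
        _ ≤ _ := Finset.single_le_sum (f := fun i => if winsAt α (W α r t) (r t) i then 1 else 0)
            (fun _ _ => Nat.zero_le _) hiR
    · simp [if_neg hc]

open Classical in
/-- Upper bound for the wins of group `U`: a member of `U` can win a round only if some
member of `U` requests in that round, and at most one agent wins per round. -/
lemma W_sum_le {n : ℕ} (α : Fin n → ℝ) (r : ℕ → Fin n → Bool) (U : Finset (Fin n)) (t : ℕ) :
    ∑ i ∈ U, W α r t i ≤ ∑ s ∈ Finset.range t,
      if (∃ k ∈ U, r s k = true) then 1 else 0 := by
  induction t with
  | zero => simp [W]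
  | succ t ih =>
    rw [Finset.sum_range_succ]
    have hW : ∑ i ∈ U, W α r (t + 1) i
        = (∑ i ∈ U, W α r t i) + ∑ i ∈ U, (if winsAt α (W α r t) (r t) i then 1 else 0) := by
      simp [W, Finset.sum_add_distrib]
    rw [hW]
    refine add_le_add ih ?_
    by_cases hc : ∃ k ∈ U, r t k = true
    · rw [if_pos hc]
      have : ∑ i ∈ U, (if winsAt α (W α r t) (r t) i then 1 else 0)
          = (U.filter (fun i => winsAt α (W α r t) (r t) i)).card := by
        rw [Finset.card_filter]
      rw [this]
      exact Finset.card_le_one.2 (fun a ha b hb =>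
        winsAt_unique (Finset.mem_filter.1 ha).2 (Finset.mem_filter.1 hb).2)
    · rw [if_neg hc]
      refine le_of_eq (Finset.sum_eq_zero fun i hi => ?_)
      rw [if_neg]
      intro hwin
      exact hc ⟨i, hi, hwin.1⟩

/-- Necessary condition for stability. If disjoint nonempty sets `R, U`
satisfy `(1 − ∏_{k∈U}(1−p k))/Σ_{j∈U} α j < ∏_{k∉R}(1−p k) · (1 − ∏_{k∈R}(1−p k))/Σ_{j∈R} α j`,
then there is `C > 0` such that almost surely
`liminf_t (Σ_{i∈R} W i t / Σ_{i∈R} α i − Σ_{i∈U} W i t / Σ_{i∈U} α i)/t ≥ C`. -/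
theorem dmmf_necessary_condition
    {Ω : Type*} [MeasurableSpace Ω] (μ : Measure Ω) {n : ℕ}
    (α p : Fin n → ℝ) (req : ℕ → Fin n → Ω → Bool) (h : IsDMMF μ α p req)
    (R U : Finset (Fin n)) (hRU : Disjoint R U) (hR : R.Nonempty) (hU : U.Nonempty)
    (hcond : (1 - ∏ k ∈ U, (1 - p k)) / (∑ j ∈ U, α j)
      < (∏ k ∈ Finset.univ \ R, (1 - p k)) * ((1 - ∏ k ∈ R, (1 - p k)) / (∑ j ∈ R, α j))) :
    ∃ C : ℝ, 0 < C ∧ ∀ᵐ ω ∂μ,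
      C ≤ liminf (fun t : ℕ =>
        ((∑ i ∈ R, (W α (fun s k => req s k ω) t i : ℝ)) / (∑ i ∈ R, α i)
          - (∑ i ∈ U, (W α (fun s k => req s k ω) t i : ℝ)) / (∑ i ∈ U, α i)) / t) atTop := by
  classical
  haveI := h.isProb
  obtain ⟨isProb, α_pos, α_sum, hp, hmeas, hindep, hlaw⟩ := h
  have hαR : 0 < ∑ i ∈ R, α i := Finset.sum_pos (fun i _ => α_pos i) hR
  have hαU : 0 < ∑ i ∈ U, α i := Finset.sum_pos (fun i _ => α_pos i) hU
  have h1mp : ∀ k : Fin n, (0:ℝ) ≤ 1 - p k := fun k => by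
    have := (hp k).2; linarith
  -- basic single-round measure computations
  have key : ∀ (s : ℕ) (T : Finset (Fin n)) (b : Fin n → Bool),
      μ (⋂ k ∈ T, {ω | req s k ω = b k}) = ∏ k ∈ T, μ {ω | req s k ω = b k} := by
    intro s T b
    have h1 : (⋂ k ∈ T, {ω | req s k ω = b k})
        = ⋂ q ∈ ({s} ×ˢ T : Finset (ℕ × Fin n)), {ω | req q.1 q.2 ω = b q.2} := by
      ext ω
      simp only [Set.mem_iInter, Finset.mem_product, Finset.mem_singleton]
      constructor
      · rintro h ⟨a, k⟩ ⟨rfl, hk⟩; exact h k hk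
      · intro h k hk; exact h (s, k) ⟨rfl, hk⟩
    have h2 : μ (⋂ q ∈ ({s} ×ˢ T : Finset (ℕ × Fin n)), {ω | req q.1 q.2 ω = b q.2})
        = ∏ q ∈ ({s} ×ˢ T : Finset (ℕ × Fin n)), μ {ω | req q.1 q.2 ω = b q.2} := by
      refine hindep.meas_biInter (fun q _ => ?_)
      exact ⟨{b q.2}, trivial, rfl⟩
    rw [h1, h2, Finset.prod_product, Finset.prod_singleton]
  have law_false : ∀ (s : ℕ) (k : Fin n),
      μ {ω | req s k ω = false} = ENNReal.ofReal (1 - p k) := by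
    intro s k
    have hc : {ω | req s k ω = false} = {ω | req s k ω = true}ᶜ := by
      ext ω; simp
    have hms : MeasurableSet {ω | req s k ω = true} :=
      hmeas s k (measurableSet_singleton true)
    rw [hc, measure_compl hms (measure_ne_top μ _), hlaw,
      ENNReal.ofReal_sub 1 (hp k).1, ENNReal.ofReal_one, measure_univ]
  have hprodfalse : ∀ (T : Finset (Fin n)),
      μ (⋂ k ∈ T, {ω | req 0 k ω = false}) = ∏ k ∈ T, ENNReal.ofReal (1 - p k) := by
    intro T
    rw [key 0 T (fun _ => false)]
    exact Finset.prod_congr rfl (fun k _ => law_false 0 k)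
  have hmeasInter : ∀ (T : Finset (Fin n)),
      MeasurableSet (⋂ k ∈ T, {ω | req 0 k ω = false}) := by
    intro T
    exact MeasurableSet.biInter (T : Set (Fin n)).to_countable
      (fun k _ => hmeas 0 k (measurableSet_singleton false))
  -- block random variables
  set block : ℕ → Ω → (Fin n → Bool) := fun s ω k => req s k ω with hblock
  have hblockmeas : ∀ s, Measurable (block s) :=
    fun s => measurable_pi_lambda _ (fun k => hmeas s k)
  have hblockident : ∀ s, IdentDistrib (block s) (block 0) μ μ := by
    intro s
    refine ⟨(hblockmeas s).aemeasurable, (hblockmeas 0).aemeasurable, ?_⟩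
    refine MeasureTheory.Measure.ext_of_singleton (fun v => ?_)
    rw [Measure.map_apply (hblockmeas s) (measurableSet_singleton v),
      Measure.map_apply (hblockmeas 0) (measurableSet_singleton v)]
    have hpre : ∀ s', block s' ⁻¹' {v} = ⋂ k ∈ (Finset.univ : Finset (Fin n)),
        {ω | req s' k ω = v k} := by
      intro s'
      ext ω
      simp [hblock, funext_iff]
    rw [hpre s, hpre 0, key s, key 0]
    refine Finset.prod_congr rfl (fun k _ => ?_)
    cases hv : v k
    · rw [law_false s k, law_false 0 k]
    · rw [hlaw s k, hlaw 0 k]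
  -- generic SLLN for indicators of block events
  have slln : ∀ A : Set (Fin n → Bool), ∀ᵐ ω ∂μ, Tendsto
      (fun t : ℕ => (∑ s ∈ Finset.range t,
        (if block s ω ∈ A then (1:ℝ) else 0)) / t) atTop
      (𝓝 ((μ (block 0 ⁻¹' A)).toReal)) := by
    intro A
    set X : ℕ → Ω → ℝ := fun s ω => if block s ω ∈ A then 1 else 0 with hX
    have hAmeas : MeasurableSet A := (Set.to_countable A).measurableSet
    set φ : (Fin n → Bool) → ℝ := fun u => if u ∈ A then 1 else 0 with hφ
    have hφmeas : Measurable φ := measurable_of_countable φ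
    have hXident : ∀ s, IdentDistrib (X s) (X 0) μ μ := fun s =>
      (hblockident s).comp hφmeas
    have hXeq : X 0 = (block 0 ⁻¹' A).indicator (fun _ => (1:ℝ)) := by
      funext ω
      simp [hX, Set.indicator_apply, Set.mem_preimage]
    have hXint : Integrable (X 0) μ := by
      rw [hXeq]
      exact (integrable_const (1:ℝ)).indicator ((hblockmeas 0) hAmeas)
    have hXavg : μ[X 0] = (μ (block 0 ⁻¹' A)).toReal := by
      rw [hXeq, integral_indicator_const _ ((hblockmeas 0) hAmeas), smul_eq_mul, mul_one, measureReal_def]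
    have hXindep : Pairwise (Function.onFun (IndepFun · · μ) X) := by
      intro s t hst
      have hdisj : Disjoint ({s} ×ˢ (Finset.univ : Finset (Fin n)))
          ({t} ×ˢ (Finset.univ : Finset (Fin n))) := by
        simp [Finset.disjoint_left, hst, hst.symm]
      have hfin := hindep.indepFun_finset _ _ hdisj (fun q => hmeas q.1 q.2)
      have hcomp := hfin.comp
        (φ := fun v : ((q : ({s} ×ˢ (Finset.univ : Finset (Fin n)) : Finset (ℕ × Fin n))) → Bool) =>
          φ (fun k => v ⟨(s, k), by simp⟩))
        (ψ := fun v : ((q : ({t} ×ˢ (Finset.univ : Finset (Fin n)) : Finset (ℕ × Fin n))) → Bool) =>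
          φ (fun k => v ⟨(t, k), by simp⟩))
        (measurable_of_countable _) (measurable_of_countable _)
      exact hcomp
    have := strong_law_ae_real X hXint hXindep hXident
    rw [hXavg] at this
    exact this
  -- the two events of interest
  set AR : Set (Fin n → Bool) := {u | (∀ k ∉ R, u k = false) ∧ (∃ k, u k = true)} with hAR
  set AU : Set (Fin n → Bool) := {u | ∃ k ∈ U, u k = true} with hAU
  -- their probabilities
  have hqR : (μ (block 0 ⁻¹' AR)).toReal
      = (∏ k ∈ Finset.univ \ R, (1 - p k)) * (1 - ∏ k ∈ R, (1 - p k)) := by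
    have hset : block 0 ⁻¹' AR
        = (⋂ k ∈ Finset.univ \ R, {ω | req 0 k ω = false})
          \ (⋂ k ∈ (Finset.univ : Finset (Fin n)), {ω | req 0 k ω = false}) := by
      ext ω
      simp only [Set.mem_preimage, hAR, Set.mem_setOf_eq, Set.mem_diff, Set.mem_iInter,
        Finset.mem_sdiff, Finset.mem_univ, true_and, hblock]
      constructor
      · rintro ⟨h1, k, hk⟩
        refine ⟨fun j hj => h1 j hj, fun hall => ?_⟩
        rw [hall k trivial] at hk; simp at hk
      · rintro ⟨h1, h2⟩
        push_neg at h2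
        obtain ⟨k, _, hk⟩ := h2
        exact ⟨h1, k, by simpa using hk⟩
    have hsub : (⋂ k ∈ (Finset.univ : Finset (Fin n)), {ω | req 0 k ω = false})
        ⊆ ⋂ k ∈ Finset.univ \ R, {ω | req 0 k ω = false} := by
      intro ω hω
      simp only [Set.mem_iInter] at hω ⊢
      exact fun k _ => hω k (Finset.mem_univ k)
    rw [hset, measure_diff hsub ((hmeasInter _).nullMeasurableSet) (measure_ne_top μ _),
      hprodfalse, hprodfalse]
    have hle : (∏ k ∈ (Finset.univ : Finset (Fin n)), ENNReal.ofReal (1 - p k))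
        ≤ ∏ k ∈ Finset.univ \ R, ENNReal.ofReal (1 - p k) := by
      rw [← Finset.prod_sdiff (Finset.subset_univ R)]
      refine mul_le_of_le_one_right' ?_
      refine Finset.prod_le_one (fun _ _ => zero_le) ?_
      intro i _; exact ENNReal.ofReal_le_one.2 (by linarith [(hp i).1])
    rw [ENNReal.toReal_sub_of_le hle (by
      exact (ENNReal.prod_lt_top (fun k _ => ENNReal.ofReal_lt_top)).ne)]
    rw [ENNReal.toReal_prod, ENNReal.toReal_prod]
    simp only [ENNReal.toReal_ofReal (h1mp _)]
    have hfactor : (∏ k ∈ (Finset.univ : Finset (Fin n)), (1 - p k))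
        = (∏ k ∈ Finset.univ \ R, (1 - p k)) * ∏ k ∈ R, (1 - p k) :=
      (Finset.prod_sdiff (Finset.subset_univ R)).symm
    rw [hfactor]; ring
  have hqU : (μ (block 0 ⁻¹' AU)).toReal = 1 - ∏ k ∈ U, (1 - p k) := by
    have hset : block 0 ⁻¹' AU = (⋂ k ∈ U, {ω | req 0 k ω = false})ᶜ := by
      ext ω
      simp only [Set.mem_preimage, hAU, Set.mem_setOf_eq, Set.mem_compl_iff, Set.mem_iInter,
        hblock]
      push_neg
      constructor
      · rintro ⟨k, hk, hk2⟩; exact ⟨k, hk, by simp [hk2]⟩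
      · rintro ⟨k, hk, hk2⟩; exact ⟨k, hk, by simpa using hk2⟩
    rw [hset, measure_compl (hmeasInter U) (measure_ne_top μ _), measure_univ, hprodfalse]
    have hle : (∏ k ∈ U, ENNReal.ofReal (1 - p k)) ≤ 1 := by
      refine Finset.prod_le_one (fun _ _ => zero_le) ?_
      intro i _; exact ENNReal.ofReal_le_one.2 (by linarith [(hp i).1])
    rw [ENNReal.toReal_sub_of_le hle ENNReal.one_ne_top, ENNReal.toReal_one,
      ENNReal.toReal_prod]
    simp only [ENNReal.toReal_ofReal (h1mp _)]
  -- the constant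
  set qR : ℝ := (∏ k ∈ Finset.univ \ R, (1 - p k)) * (1 - ∏ k ∈ R, (1 - p k)) with hqRdef
  set qU : ℝ := 1 - ∏ k ∈ U, (1 - p k) with hqUdef
  set C : ℝ := qR / (∑ i ∈ R, α i) - qU / (∑ i ∈ U, α i) with hC
  have hCpos : 0 < C := by
    rw [hC, sub_pos, hqRdef, hqUdef, mul_div_assoc]
    exact hcond
  refine ⟨C, hCpos, ?_⟩
  filter_upwards [slln AR, slln AU] with ω hXl hYl
  rw [hqR] at hXl
  rw [hqU] at hYl
  set r : ℕ → Fin n → Bool := fun s k => req s k ω with hr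
  -- identification of the indicator sums with the natural-number counts
  have hXsum : ∀ t : ℕ, (∑ s ∈ Finset.range t, (if block s ω ∈ AR then (1:ℝ) else 0))
      = ((∑ s ∈ Finset.range t,
          if (∀ k ∉ R, r s k = false) ∧ (∃ k, r s k = true) then 1 else 0 : ℕ) : ℝ) := by
    intro t
    rw [Nat.cast_sum]
    refine Finset.sum_congr rfl (fun s _ => ?_)
    by_cases hmem : block s ω ∈ AR
    · have hmem' : (∀ k ∉ R, r s k = false) ∧ (∃ k, r s k = true) := hmem
      rw [if_pos hmem, if_pos hmem']; simp
    · have hmem' : ¬((∀ k ∉ R, r s k = false) ∧ (∃ k, r s k = true)) := hmem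
      rw [if_neg hmem, if_neg hmem']; simp
  have hYsum : ∀ t : ℕ, (∑ s ∈ Finset.range t, (if block s ω ∈ AU then (1:ℝ) else 0))
      = ((∑ s ∈ Finset.range t, if (∃ k ∈ U, r s k = true) then 1 else 0 : ℕ) : ℝ) := by
    intro t
    rw [Nat.cast_sum]
    refine Finset.sum_congr rfl (fun s _ => ?_)
    by_cases hmem : block s ω ∈ AU
    · have hmem' : (∃ k ∈ U, r s k = true) := hmem
      rw [if_pos hmem, if_pos hmem']; simp
    · have hmem' : ¬(∃ k ∈ U, r s k = true) := hmem
      rw [if_neg hmem, if_neg hmem']; simp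
  -- the auxiliary sequence and its limit
  set g : ℕ → ℝ := fun t =>
    ((∑ s ∈ Finset.range t, (if block s ω ∈ AR then (1:ℝ) else 0)) / t) / (∑ i ∈ R, α i)
      - ((∑ s ∈ Finset.range t, (if block s ω ∈ AU then (1:ℝ) else 0)) / t) / (∑ i ∈ U, α i)
    with hg
  have hgtend : Tendsto g atTop (𝓝 C) := by
    rw [hg, hC]
    refine Tendsto.congr (fun t => ?_)
      ((hXl.div_const (∑ i ∈ R, α i)).sub (hYl.div_const (∑ i ∈ U, α i)))
    congr!
  -- the target sequence
  set f : ℕ → ℝ := fun t =>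
    ((∑ i ∈ R, (W α r t i : ℝ)) / (∑ i ∈ R, α i)
      - (∑ i ∈ U, (W α r t i : ℝ)) / (∑ i ∈ U, α i)) / t with hf
  -- pointwise comparison
  have hfg : ∀ t : ℕ, g t ≤ f t := by
    intro t
    have h1 : (∑ s ∈ Finset.range t, (if block s ω ∈ AR then (1:ℝ) else 0))
        ≤ ∑ i ∈ R, (W α r t i : ℝ) := by
      rw [hXsum t]
      exact_mod_cast W_sum_ge α r R t
    have h2 : (∑ i ∈ U, (W α r t i : ℝ))
        ≤ (∑ s ∈ Finset.range t, (if block s ω ∈ AU then (1:ℝ) else 0)) := by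
      rw [hYsum t]
      exact_mod_cast W_sum_le α r U t
    have hnum : (∑ s ∈ Finset.range t, (if block s ω ∈ AR then (1:ℝ) else 0)) / (∑ i ∈ R, α i)
        - (∑ s ∈ Finset.range t, (if block s ω ∈ AU then (1:ℝ) else 0)) / (∑ i ∈ U, α i)
        ≤ (∑ i ∈ R, (W α r t i : ℝ)) / (∑ i ∈ R, α i)
          - (∑ i ∈ U, (W α r t i : ℝ)) / (∑ i ∈ U, α i) :=
      sub_le_sub ((div_le_div_iff_of_pos_right hαR).2 h1) ((div_le_div_iff_of_pos_right hαU).2 h2)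
    have hgt : g t
        = ((∑ s ∈ Finset.range t, (if block s ω ∈ AR then (1:ℝ) else 0)) / (∑ i ∈ R, α i)
          - (∑ s ∈ Finset.range t, (if block s ω ∈ AU then (1:ℝ) else 0)) / (∑ i ∈ U, α i))
            / t := by
      rw [hg]; ring
    rw [hgt, hf, div_eq_mul_inv, div_eq_mul_inv]
    exact mul_le_mul_of_nonneg_right hnum (by positivity)
  -- upper bound on `f` (for coboundedness of the liminf)
  have hWle : ∀ t : ℕ, (∑ i ∈ R, W α r t i) ≤ t := by
    intro t
    refine le_trans (Finset.sum_le_sum_of_subset (Finset.subset_univ R)) ?_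
    refine le_trans (W_sum_le α r Finset.univ t) ?_
    refine le_trans (Finset.sum_le_sum (g := fun _ => 1) (fun s _ => ?_)) ?_
    · split_ifs <;> simp
    · simp
  have hfub : ∀ t : ℕ, f t ≤ 1 / (∑ i ∈ R, α i) := by
    intro t
    rcases Nat.eq_zero_or_pos t with ht | ht
    · subst ht
      rw [hf]
      simp only [Nat.cast_zero, div_zero]
      positivity
    have htpos : (0:ℝ) < t := by exact_mod_cast ht
    have hA : (∑ i ∈ R, (W α r t i : ℝ)) ≤ (t : ℝ) := by exact_mod_cast hWle t
    have hB : (0:ℝ) ≤ ∑ i ∈ U, (W α r t i : ℝ) :=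
      Finset.sum_nonneg (fun i _ => by positivity)
    have hnum : (∑ i ∈ R, (W α r t i : ℝ)) / (∑ i ∈ R, α i)
        - (∑ i ∈ U, (W α r t i : ℝ)) / (∑ i ∈ U, α i) ≤ (t : ℝ) / (∑ i ∈ R, α i) := by
      have := (div_le_div_iff_of_pos_right hαR).2 hA
      have h0 : 0 ≤ (∑ i ∈ U, (W α r t i : ℝ)) / (∑ i ∈ U, α i) := by positivity
      linarith
    rw [hf]
    calc ((∑ i ∈ R, (W α r t i : ℝ)) / (∑ i ∈ R, α i)
          - (∑ i ∈ U, (W α r t i : ℝ)) / (∑ i ∈ U, α i)) / t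
        ≤ ((t : ℝ) / (∑ i ∈ R, α i)) / t := by
          rw [div_eq_mul_inv, div_eq_mul_inv ((t:ℝ) / _)]
          exact mul_le_mul_of_nonneg_right hnum (by positivity)
      _ = 1 / (∑ i ∈ R, α i) := by
          field_simp
  -- conclusion via liminf comparison
  have hbddg : IsBoundedUnder (· ≥ ·) atTop g := hgtend.isBoundedUnder_ge
  have hcobddf : IsCoboundedUnder (· ≥ ·) atTop f := by
    refine IsBoundedUnder.isCoboundedUnder_ge ⟨1 / (∑ i ∈ R, α i), ?_⟩
    rw [eventually_map]
    exact Eventually.of_forall hfub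
  calc C = liminf g atTop := hgtend.liminf_eq.symm
    _ ≤ liminf f atTop := liminf_le_liminf (Eventually.of_forall hfg) hbddg hcobddf
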